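/- Let n ≡ 1 (mod 4), and let A₀, ..., Aₙ be the distance matrices of the hypercube Qₙ. Then for every i with 0 ≤ i ≤ (n−1)/2, the kernel of A₀ + A₁ is contained in the kernel of A_i + A_{n−i}. -/

import Mathlib

/-- The `i`-th distance matrix of the hypercube `Qₙ` (over ℝ). -/
noncomputable def distMatrix (n i : ℕ) :
    Matrix (Fin n → ZMod 2) (Fin n → ZMod 2) ℝ :=
  fun u v => if hammingDist u v = i then 1 else 0


namespace Stmt13Aux

abbrev V (n : ℕ) := Fin n → ZMod 2

def sgl (n : ℕ) (j : Fin n) : V n := fun j' => if j' = j then 1 else 0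

lemma sgl_apply (n : ℕ) (j j' : Fin n) : sgl n j j' = if j' = j then 1 else 0 := rfl

noncomputable def ε (a : ZMod 2) : ℝ := if a = 0 then 1 else -1

lemma ε_zero : ε 0 = 1 := by simp [ε]

lemma zmod2_add_self (a : ZMod 2) : a + a = 0 := by revert a; decide

lemma zmod2_ne_iff : ∀ a b : ZMod 2, a ≠ b ↔ b = a + 1 := by decide

lemma zmod2_eq_one (a : ZMod 2) (h : a ≠ 0) : a = 1 := by revert a; decide

lemma ε_add (a b : ZMod 2) : ε (a + b) = ε a * ε b := by
  have h2 : ((1 : ZMod 2) + 1) = 0 := by decide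
  rcases (by decide : ∀ x : ZMod 2, x = 0 ∨ x = 1) a with rfl | rfl <;>
    rcases (by decide : ∀ x : ZMod 2, x = 0 ∨ x = 1) b with rfl | rfl <;> simp +decide [ε, h2]

lemma ε_eq (a : ZMod 2) : ε a = if a = 1 then -1 else 1 := by
  rcases (by decide : ∀ x : ZMod 2, x = 0 ∨ x = 1) a with rfl | rfl <;> simp +decide [ε]

noncomputable def χ {n : ℕ} (w u : V n) : ℝ := ∏ j, ε (w j * u j)

lemma χ_add {n : ℕ} (w u v : V n) : χ w (u + v) = χ w u * χ w v := by
  unfold χ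
  rw [← Finset.prod_mul_distrib]
  exact Finset.prod_congr rfl fun j _ => by rw [Pi.add_apply, mul_add, ε_add]

lemma χ_single {n : ℕ} (w : V n) (j : Fin n) : χ w (sgl n j) = ε (w j) := by
  unfold χ
  rw [Finset.prod_eq_single j]
  · simp [sgl]
  · intro j' _ hj'
    simp [sgl, hj', ε_zero]
  · simp

def ones (n : ℕ) : V n := fun _ => 1

lemma χ_ones {n : ℕ} (w : V n) : χ w (ones n) = ∏ j, ε (w j) := by
  unfold χ ones
  simp

lemma ones_add_ones (n : ℕ) : ones n + ones n = 0 := by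
  funext j
  exact zmod2_add_self 1

lemma single_add_single {n : ℕ} (j : Fin n) :
    sgl n j + sgl n j = 0 := by
  funext j'
  exact zmod2_add_self _

lemma sum_χ {n : ℕ} (c : V n) : ∑ w : V n, χ w c = if c = 0 then (2:ℝ)^n else 0 := by
  unfold χ
  have h1 : ∑ w : V n, ∏ j, ε (w j * c j)
      = ∏ j, ∑ b : ZMod 2, ε (b * c j) := by
    rw [Finset.prod_univ_sum, ← Fintype.piFinset_univ]
  have h2 : ∀ j, ∑ b : ZMod 2, ε (b * c j) = 1 + ε (c j) := by
    intro j
    rw [show (Finset.univ : Finset (ZMod 2)) = {0, 1} from by decide]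
    rw [Finset.sum_pair (by decide)]
    simp [ε_zero]
  rw [h1, Finset.prod_congr rfl fun j _ => h2 j]
  by_cases hc : c = 0
  · subst hc
    simp only [Pi.zero_apply, ε_zero, if_pos rfl]
    norm_num
  · rw [if_neg hc]
    obtain ⟨j, hj⟩ : ∃ j, c j ≠ 0 := by
      by_contra h
      push_neg at h
      exact hc (funext h)
    refine Finset.prod_eq_zero (Finset.mem_univ j) ?_
    rw [ε_eq, if_pos (zmod2_eq_one _ hj)]
    ring

lemma hammingDist_eq_card {n : ℕ} (u v : V n) :
    hammingDist u v = (Finset.univ.filter fun j => u j ≠ v j).card := rfl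

lemma mulVec_eq {n : ℕ} (i : ℕ) (x : V n → ℝ) (u : V n) :
    (distMatrix n i).mulVec x u
      = ∑ v ∈ Finset.univ.filter (fun v => hammingDist u v = i), x v := by
  rw [Finset.sum_filter]
  simp [Matrix.mulVec, dotProduct, distMatrix, ite_mul]

lemma dist_eq_one_iff {n : ℕ} (u v : V n) :
    hammingDist u v = 1 ↔ ∃ j, v = u + sgl n j := by
  rw [hammingDist_eq_card]
  constructor
  · intro h
    obtain ⟨j0, hj⟩ := Finset.card_eq_one.mp h
    have hmem : ∀ j', (u j' ≠ v j') ↔ j' = j0 := by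
      intro j'
      constructor
      · intro hne
        have : j' ∈ ({j0} : Finset (Fin n)) :=
          hj ▸ (Finset.mem_filter.mpr ⟨Finset.mem_univ _, hne⟩)
        simpa using this
      · intro he
        have hin : j0 ∈ Finset.filter (fun i => u i ≠ v i) Finset.univ := by
          rw [hj]; simp
        rw [he]
        exact (Finset.mem_filter.mp hin).2
    refine ⟨j0, ?_⟩
    funext j'
    rcases eq_or_ne j' j0 with rfl | hne
    · have h1 := (hmem j').mpr rfl
      rw [Pi.add_apply, (zmod2_ne_iff _ _).mp h1, sgl_apply, if_pos rfl]
    · have h1 : u j' = v j' := by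
        by_contra hc
        exact hne ((hmem j').mp hc)
      rw [Pi.add_apply, sgl_apply, if_neg hne, add_zero, h1]
  · rintro ⟨j, rfl⟩
    have hfil : Finset.filter (fun i => u i ≠ (u + sgl n j) i) Finset.univ
        = {j} := by
      ext j'
      simp only [Finset.mem_filter, Finset.mem_univ, true_and, Finset.mem_singleton,
        Pi.add_apply]
      rcases eq_or_ne j' j with rfl | hne
      · simp [sgl_apply, zmod2_ne_iff]
      · simp [sgl_apply, hne, zmod2_ne_iff]
    rw [hfil, Finset.card_singleton]

lemma single_inj {n : ℕ} (u : V n) : Function.Injective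
    (fun j : Fin n => u + sgl n j) := by
  intro j j' h
  have h2 : sgl n j = sgl n j' := add_left_cancel h
  by_contra hne
  have := congrFun h2 j
  simp [sgl_apply, hne] at this

lemma mulVec_one {n : ℕ} (x : V n → ℝ) (u : V n) :
    (distMatrix n 1).mulVec x u = ∑ j : Fin n, x (u + sgl n j) := by
  rw [mulVec_eq]
  rw [show Finset.filter (fun v => hammingDist u v = 1) Finset.univ
      = Finset.image (fun j : Fin n => u + sgl n j) Finset.univ from ?_]
  · rw [Finset.sum_image (fun j _ j' _ h => single_inj u h)]
  · ext v
    simp only [Finset.mem_filter, Finset.mem_univ, true_and, Finset.mem_image,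
      dist_eq_one_iff]
    exact exists_congr fun j => eq_comm

lemma mulVec_zero' {n : ℕ} (x : V n → ℝ) (u : V n) :
    (distMatrix n 0).mulVec x u = x u := by
  rw [mulVec_eq]
  rw [show Finset.filter (fun v => hammingDist u v = 0) Finset.univ = {u} from ?_]
  · simp
  · ext v
    simp [hammingDist_eq_zero, eq_comm]

lemma dist_add_ones {n : ℕ} (u v : V n) :
    hammingDist u (v + ones n) = n - hammingDist u v := by
  rw [hammingDist_eq_card, hammingDist_eq_card]
  have h : ∀ j, (u j ≠ (v + ones n) j) ↔ ¬ (u j ≠ v j) := by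
    intro j
    show (u j ≠ v j + 1) ↔ ¬ (u j ≠ v j)
    exact (by decide : ∀ a b : ZMod 2, (a ≠ b + 1 ↔ ¬ a ≠ b)) (u j) (v j)
  rw [Finset.filter_congr (fun j _ => h j)]
  rw [Finset.filter_not, Finset.card_sdiff_of_subset (Finset.filter_subset _ _)]
  simp

end Stmt13Aux

open Stmt13Aux in
/-- For `n ≡ 1 (mod 4)` and `0 ≤ i ≤ (n−1)/2`, `ker (A₀ + A₁) ⊆ ker (A_i + A_{n−i})`
for the distance matrices of `Qₙ`. -/
theorem stmt_13 (n : ℕ) (hn : n % 4 = 1) (i : ℕ) (hi : i ≤ (n - 1) / 2)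
    (x : (Fin n → ZMod 2) → ℝ)
    (hx : (distMatrix n 0 + distMatrix n 1).mulVec x = 0) :
    (distMatrix n i + distMatrix n (n - i)).mulVec x = 0 := by
  have hn1 : 1 ≤ n := by omega
  have hin : i ≤ n := le_trans hi (by omega)
  -- pointwise form of hx
  have hx' : ∀ u : V n, x u + ∑ j : Fin n, x (u + sgl n j) = 0 := by
    intro u
    have h := congrFun hx u
    rw [Matrix.add_mulVec, Pi.add_apply, mulVec_zero', mulVec_one] at h
    exact h
  obtain ⟨y, hy_def⟩ : ∃ y : V n → ℝ, y = fun v => x v + x (v + ones n) := ⟨_, rfl⟩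
  have hy_app : ∀ v, y v = x v + x (v + ones n) := fun v => by rw [hy_def]
  have hy_shift : ∀ u, y (u + ones n) = y u := by
    intro u
    rw [hy_app, hy_app, add_assoc, ones_add_ones, add_zero, add_comm]
  have hy' : ∀ u : V n, y u + ∑ j : Fin n, y (u + sgl n j) = 0 := by
    intro u
    have e1 := hx' u
    have e2 := hx' (u + ones n)
    have e3 : ∑ j : Fin n, y (u + sgl n j)
        = ∑ j : Fin n, x (u + sgl n j) + ∑ j : Fin n, x ((u + ones n) + sgl n j) := by
      rw [← Finset.sum_add_distrib]
      refine Finset.sum_congr rfl fun j _ => ?_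
      rw [hy_app, add_right_comm]
    rw [hy_app, e3]
    linarith
  -- Fourier coefficients
  obtain ⟨Y, hY_def⟩ : ∃ Y : V n → ℝ, Y = fun w => ∑ u : V n, χ w u * y u := ⟨_, rfl⟩
  have hY_app : ∀ w, Y w = ∑ u : V n, χ w u * y u := fun w => by rw [hY_def]
  have shift_sum : ∀ (w c : V n), c + c = 0 →
      ∑ u : V n, χ w u * y (u + c) = χ w c * Y w := by
    intro w c hcc
    rw [hY_app, Finset.mul_sum]
    apply Fintype.sum_bijective (· + c) (Equiv.addRight c).bijective
    intro t
    rw [← mul_assoc, ← χ_add,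
      show c + (t + c) = t by rw [add_comm t c, ← add_assoc, hcc, zero_add]]
  have h1 : ∀ w : V n, (1 + ∑ j, ε (w j)) * Y w = 0 := by
    intro w
    have h0 : ∑ u : V n, (χ w u * y u + ∑ j : Fin n, χ w u * y (u + sgl n j)) = 0 := by
      refine Finset.sum_eq_zero fun u _ => ?_
      rw [← Finset.mul_sum, ← mul_add, hy' u, mul_zero]
    rw [Finset.sum_add_distrib] at h0
    have h4 : ∑ u : V n, ∑ j : Fin n, χ w u * y (u + sgl n j)
        = (∑ j, ε (w j)) * Y w := by
      rw [Finset.sum_comm, Finset.sum_mul]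
      refine Finset.sum_congr rfl fun j _ => ?_
      rw [shift_sum w _ (single_add_single j), χ_single]
    rw [h4, ← hY_app] at h0
    rw [add_mul, one_mul]
    exact h0
  have h2 : ∀ w : V n, (∏ j, ε (w j)) * Y w = Y w := by
    intro w
    have hs : ∑ u : V n, χ w u * y (u + ones n) = χ w (ones n) * Y w :=
      shift_sum w (ones n) (ones_add_ones n)
    rw [χ_ones] at hs
    rw [← hs, hY_app]
    exact Finset.sum_congr rfl fun u _ => by rw [hy_shift]
  have h3 : ∀ w : V n, Y w = 0 := by
    intro w
    set k := (Finset.univ.filter fun j => w j = (1 : ZMod 2)).card with hk_def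
    have hkn : k ≤ n := by
      simpa using Finset.card_filter_le Finset.univ (fun j => w j = (1 : ZMod 2))
    have hsum : ∑ j, ε (w j) = (n : ℝ) - 2 * k := by
      calc ∑ j, ε (w j) = ∑ j : Fin n, (if w j = 1 then (-1 : ℝ) else 1) :=
            Finset.sum_congr rfl fun j _ => ε_eq (w j)
        _ = (n : ℝ) - 2 * k := by
            rw [Finset.sum_ite]
            simp only [Finset.sum_const, nsmul_eq_mul]
            rw [Finset.filter_not, Finset.card_sdiff_of_subset (Finset.filter_subset _ _)]
            simp only [Finset.card_univ, Fintype.card_fin, ← hk_def]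
            rw [Nat.cast_sub hkn]
            ring
    have hprod : ∏ j, ε (w j) = (-1 : ℝ) ^ k := by
      calc ∏ j, ε (w j) = ∏ j : Fin n, (if w j = 1 then (-1 : ℝ) else 1) :=
            Finset.prod_congr rfl fun j _ => ε_eq (w j)
        _ = (-1 : ℝ) ^ k := by
            rw [Finset.prod_ite]
            simp [← hk_def]
    by_cases hk : n + 1 = 2 * k
    · have hkodd : Odd k := by rw [Nat.odd_iff]; omega
      have hY := h2 w
      rw [hprod, hkodd.neg_one_pow] at hY
      linarith
    · have hne : (1 + ∑ j, ε (w j)) ≠ 0 := by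
        rw [hsum]
        intro h
        have hc : (n : ℝ) + 1 = 2 * (k : ℝ) := by linarith
        exact hk (by exact_mod_cast hc)
      rcases mul_eq_zero.mp (h1 w) with h | h
      · exact absurd h hne
      · exact h
  -- inversion: y = 0
  have hvv : ∀ v : V n, v + v = 0 := fun v => funext fun j => zmod2_add_self (v j)
  have hy0 : ∀ u, y u = 0 := by
    intro u
    have hcalc : (0 : ℝ) = 2 ^ n * y u := by
      calc (0 : ℝ) = ∑ w : V n, χ w u * Y w := by simp [h3]
        _ = ∑ w : V n, ∑ v : V n, χ w (u + v) * y v := by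
            refine Finset.sum_congr rfl fun w _ => ?_
            rw [hY_app, Finset.mul_sum]
            exact Finset.sum_congr rfl fun v _ => by rw [← mul_assoc, ← χ_add]
        _ = ∑ v : V n, (∑ w : V n, χ w (u + v)) * y v := by
            rw [Finset.sum_comm]
            exact Finset.sum_congr rfl fun v _ => by rw [Finset.sum_mul]
        _ = ∑ v : V n, (if u + v = 0 then (2:ℝ)^n else 0) * y v :=
            Finset.sum_congr rfl fun v _ => by rw [sum_χ]
        _ = 2 ^ n * y u := by
            rw [Finset.sum_eq_single u]
            · rw [if_pos (hvv u)]
            · intro v _ hv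
              rw [if_neg, zero_mul]
              intro h
              apply hv
              have h5 : u + (u + v) = u + 0 := by rw [h]
              rwa [← add_assoc, hvv, zero_add, add_zero] at h5
            · intro h; exact absurd (Finset.mem_univ u) h
    have h2n : (2 : ℝ) ^ n ≠ 0 := pow_ne_zero n two_ne_zero
    have := hcalc.symm
    rcases mul_eq_zero.mp this with h | h
    · exact absurd h h2n
    · exact h
  -- final assembly
  funext u
  rw [Matrix.add_mulVec, Pi.add_apply, mulVec_eq, mulVec_eq, Pi.zero_apply]
  have hsecond : ∑ v ∈ Finset.univ.filter (fun v => hammingDist u v = n - i), x v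
      = ∑ v ∈ Finset.univ.filter (fun v => hammingDist u v = i), x (v + ones n) := by
    refine (Finset.sum_equiv (Equiv.addRight (ones n)) ?_ ?_).symm
    · intro v
      simp only [Finset.mem_filter, Finset.mem_univ, true_and, Equiv.coe_addRight]
      rw [dist_add_ones]
      have hd : hammingDist u v ≤ n := by
        have hle := hammingDist_le_card_fintype (x := u) (y := v)
        simpa using hle
      omega
    · intro v _
      rfl
  rw [hsecond, ← Finset.sum_add_distrib]
  refine Finset.sum_eq_zero fun v _ => ?_
  rw [← hy_app]
  exact hy0 v
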